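/- Fix K > 1 and a smooth function φ:[0,∞)→[0,1] with 𝟙_{[0,K]} ≤ φ ≤ 𝟙_{[0,2K]} and |φ′| ≤ 𝟙_{[0,2K]}. There exists c > 0, depending only on K and φ, such that for all W ≥ 1, all δ > 0 with δ·W ≤ c, all Hermitian W×W matrices G, G̃, all real z with |z| ≤ √W, and each sign σ ∈ {+1,−1}, the map η^σ : Mat_W(ℂ) → Mat_W(ℂ) defined by η^σ(A) := exp( σ·δ·γ(G,G̃)·φ(‖A‖²_HS/W)·φ(‖G + z·1 + A·G̃·A*‖²_HS/W²) ) · A, where γ(G,G̃) := φ(‖G‖²_HS/W²)·φ(‖G̃‖²_HS/W²), is injective. -/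

import Mathlib

open Matrix

noncomputable section

namespace RBM

abbrev Mat (W : ℕ) := Matrix (Fin W) (Fin W) ℂ

/-- Squared Hilbert–Schmidt norm `‖M‖²_HS = tr(M*M)`. -/
def hsSq {W : ℕ} (M : Mat W) : ℝ := (Matrix.trace (Mᴴ * M)).re

lemma hsSq_eq_sum {W : ℕ} (M : Mat W) :
    hsSq M = ∑ i, ∑ j, Complex.normSq (M j i) := by
  simp only [hsSq, Matrix.trace, Matrix.diag, Matrix.mul_apply, Matrix.conjTranspose_apply,
    Complex.re_sum]
  congr 1; ext i; congr 1; ext j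
  simp [Complex.normSq_apply]

lemma hsSq_nonneg {W : ℕ} (M : Mat W) : 0 ≤ hsSq M := by
  rw [hsSq_eq_sum]
  exact Finset.sum_nonneg fun i _ => Finset.sum_nonneg fun j _ => Complex.normSq_nonneg _

lemma hsSq_smul {W : ℕ} (r : ℝ) (M : Mat W) : hsSq (r • M) = r ^ 2 * hsSq M := by
  simp only [hsSq_eq_sum, Matrix.smul_apply, Finset.mul_sum]
  congr 1; ext i; congr 1; ext j
  rw [show r • M j i = (r : ℂ) * M j i by simp [Complex.real_smul]]
  rw [Complex.normSq_mul, Complex.normSq_ofReal]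
  ring

def rinner {W : ℕ} (X M : Mat W) : ℝ := (Matrix.trace (Xᴴ * M)).re

lemma rinner_self {W : ℕ} (M : Mat W) : rinner M M = hsSq M := rfl

lemma hsSq_add_smul {W : ℕ} (X M : Mat W) (s : ℝ) :
    hsSq (X + s • M) = hsSq X + 2 * s * rinner X M + s ^ 2 * hsSq M := by
  have hct : (s • M)ᴴ = s • Mᴴ := by
    ext i j; simp [Matrix.conjTranspose_apply, star_smul]
  have expand : (X + s • M)ᴴ * (X + s • M)
      = Xᴴ * X + (s • (Xᴴ * M) + (s • (Mᴴ * X) + (s^2) • (Mᴴ * M))) := by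
    rw [Matrix.conjTranspose_add, hct]
    rw [Matrix.add_mul, Matrix.mul_add, Matrix.mul_add]
    rw [Matrix.smul_mul, Matrix.mul_smul, Matrix.smul_mul, Matrix.mul_smul]
    rw [smul_smul]
    ring_nf
    abel
  have htr : (Matrix.trace (Mᴴ * X)).re = (Matrix.trace (Xᴴ * M)).re := by
    have : Mᴴ * X = (Xᴴ * M)ᴴ := by
      rw [Matrix.conjTranspose_mul, Matrix.conjTranspose_conjTranspose]
    rw [this, Matrix.trace_conjTranspose]
    simp [Complex.star_def]
  simp only [hsSq, rinner, expand, Matrix.trace_add, Matrix.trace_smul, Complex.add_re,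
    Complex.real_smul]
  simp [Complex.mul_re, htr, ← Complex.ofReal_pow]
  ring

lemma rinner_sq_le {W : ℕ} (X M : Mat W) : rinner X M ^ 2 ≤ hsSq X * hsSq M := by
  have h : ∀ s : ℝ, 0 ≤ hsSq M * (s * s) + (2 * rinner X M) * s + hsSq X := by
    intro s
    have := hsSq_nonneg (X + s • M)
    rw [hsSq_add_smul] at this
    nlinarith [this]
  have := discrim_le_zero h
  rw [discrim] at this
  nlinarith [this]

lemma hsSq_conjTranspose {W : ℕ} (M : Mat W) : hsSq Mᴴ = hsSq M := by
  simp only [hsSq_eq_sum, Matrix.conjTranspose_apply]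
  rw [Finset.sum_comm]
  simp

lemma hsSq_mul_le {W : ℕ} (A B : Mat W) : hsSq (A * B) ≤ hsSq A * hsSq B := by
  simp only [hsSq_eq_sum]
  have key : ∀ j i : Fin W, Complex.normSq ((A * B) j i)
      ≤ (∑ k, Complex.normSq (A j k)) * (∑ k, Complex.normSq (B k i)) := by
    intro j i
    have h1 : ‖(A * B) j i‖ ≤ ∑ k, ‖A j k‖ * ‖B k i‖ := by
      rw [Matrix.mul_apply]
      simpa only [norm_mul] using
        norm_sum_le Finset.univ (fun k => A j k * B k i)
    have h2 : (∑ k, ‖A j k‖ * ‖B k i‖) ^ 2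
        ≤ (∑ k, ‖A j k‖ ^ 2) * (∑ k, ‖B k i‖ ^ 2) :=
      Finset.sum_mul_sq_le_sq_mul_sq _ _ _
    have h3 : Complex.normSq ((A * B) j i) = ‖(A * B) j i‖ ^ 2 :=
      (Complex.sq_norm _).symm
    have h4 : ∀ z : ℂ, Complex.normSq z = ‖z‖ ^ 2 := fun z => (Complex.sq_norm z).symm
    simp only [h3, h4]
    refine le_trans (by nlinarith [norm_nonneg ((A*B) j i), Finset.sum_nonneg (fun k (_: k ∈ Finset.univ) => mul_nonneg (norm_nonneg (A j k)) (norm_nonneg (B k i)))]) h2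
  calc (∑ i, ∑ j, Complex.normSq ((A * B) j i))
      ≤ ∑ i, ∑ j, (∑ k, Complex.normSq (A j k)) * (∑ k, Complex.normSq (B k i)) := by
        refine Finset.sum_le_sum fun i _ => Finset.sum_le_sum fun j _ => key j i
    _ = (∑ j, ∑ k, Complex.normSq (A j k)) * (∑ i, ∑ k, Complex.normSq (B k i)) := by
        simp_rw [← Finset.sum_mul]
        rw [← Finset.mul_sum]
    _ = (∑ i, ∑ j, Complex.normSq (A j i)) * (∑ i, ∑ j, Complex.normSq (B j i)) := by
        congr 1
        exact Finset.sum_comm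



lemma abs_rinner_le {W : ℕ} (X M : Mat W) {R S : ℝ} (hX : hsSq X ≤ R) (hM : hsSq M ≤ S) :
    |rinner X M| ≤ Real.sqrt (R * S) := by
  have h1 := rinner_sq_le X M
  have h2 : rinner X M ^ 2 ≤ R * S := by
    nlinarith [hsSq_nonneg X, hsSq_nonneg M]
  calc |rinner X M| = Real.sqrt (rinner X M ^ 2) := by
        rw [Real.sqrt_sq_eq_abs]
    _ ≤ Real.sqrt (R * S) := Real.sqrt_le_sqrt h2

lemma hsSq_perturb {W : ℕ} (X M : Mat W) (s : ℝ) {R S : ℝ} (hX : hsSq X ≤ R) (hM : hsSq M ≤ S) :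
    |hsSq (X + s • M) - hsSq X| ≤ 2 * |s| * Real.sqrt (R * S) + s ^ 2 * S := by
  rw [hsSq_add_smul]
  have h1 := abs_rinner_le X M hX hM
  have h2 := hsSq_nonneg M
  have e : hsSq X + 2 * s * rinner X M + s ^ 2 * hsSq M - hsSq X
      = 2 * s * rinner X M + s ^ 2 * hsSq M := by ring
  rw [e]
  refine (abs_add_le _ _).trans ?_
  have e1 : |2 * s * rinner X M| = 2 * |s| * |rinner X M| := by
    rw [abs_mul, abs_mul]; simp
  have e2 : |s ^ 2 * hsSq M| = s ^ 2 * hsSq M := abs_of_nonneg (by positivity)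
  rw [e1, e2]
  have h3 : 2 * |s| * |rinner X M| ≤ 2 * |s| * Real.sqrt (R * S) := by
    have := abs_nonneg s
    nlinarith
  nlinarith [sq_nonneg s]


lemma conjTranspose_real_smul {W : ℕ} (r : ℝ) (A : Mat W) : (r • A)ᴴ = r • Aᴴ := by
  ext i j
  simp only [Matrix.conjTranspose_apply, Matrix.smul_apply, star_smul, star_trivial]

lemma hsSq_triple_le {W : ℕ} (A Gt : Mat W) :
    hsSq (A * Gt * Aᴴ) ≤ hsSq A * hsSq Gt * hsSq A := by
  have h1 := hsSq_mul_le (A * Gt) Aᴴ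
  have h2 := hsSq_mul_le A Gt
  rw [hsSq_conjTranspose] at h1
  nlinarith [hsSq_nonneg (A * Gt), hsSq_nonneg A, hsSq_nonneg Gt]

lemma mbound {K Wr a g m : ℝ} (hK : 1 < K) (hW : 1 ≤ Wr) (ha0 : 0 ≤ a) (hg0 : 0 ≤ g)
    (hm : m ≤ a * g * a) (ha : a ≤ 8 * K * Wr) (hg : g ≤ 2 * K * Wr ^ 2) :
    m ≤ 128 * K ^ 3 * Wr ^ 4 := by
  have hK0 : (0:ℝ) < K := by linarith
  have hW0 : (0:ℝ) < Wr := by linarith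
  nlinarith [mul_nonneg ha0 hg0, mul_nonneg (mul_nonneg ha0 hg0) ha0,
    mul_le_mul (mul_le_mul ha hg hg0 (by positivity)) ha ha0 (by positivity)]

lemma lem_a {K d v : ℝ} (hK : 0 < K) (hd : 0 ≤ d) (h : v ≤ 2 * K * d) : v ≤ 8 * K * d := by
  nlinarith

lemma lem_b {K u v : ℝ} (hK : 0 < K) (h14 : 1/4 ≤ u) (hu : u < 1)
    (h : v ≤ 2 * K * (1/u - 1)) : v ≤ 8 * K * (1 - u) := by
  have hu0 : (0:ℝ) < u := by linarith
  have key : 1/u - 1 ≤ 4 * (1 - u) := by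
    rw [div_sub' (ne_of_gt hu0), div_le_iff₀ hu0]
    nlinarith
  nlinarith

lemma lem_c {K Wr u a : ℝ} (hK : 0 < K) (hW : 0 < Wr) (h14 : 1/4 ≤ u) (ha0 : 0 ≤ a)
    (h : u * a ≤ 2 * K * Wr) : a ≤ 8 * K * Wr := by
  nlinarith [mul_nonneg (by linarith : (0:ℝ) ≤ u - 1/4) ha0]

set_option maxHeartbeats 1000000 in
lemma final_arith {K δ Wr t s : ℝ} (hK : 1 < K) (hδ : 0 < δ) (hW1 : 1 ≤ Wr)
    (hδW : δ * Wr * K ^ 3 ≤ 1 / 100000) (h4t : |s| ≤ 4 * |t|) (h8d : |s| ≤ 8 * δ)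
    (hmain : |t| ≤ δ * (8 * K * |s|) + δ * (32 * K ^ 2 * |s| * Wr)
      + δ * (128 * K ^ 3 * s ^ 2 * Wr ^ 2)) : t = 0 := by
  have hK0 : (0:ℝ) < K := by linarith
  have hW0 : (0:ℝ) < Wr := by linarith
  have hs0 := abs_nonneg s
  have ht0 := abs_nonneg t
  -- basic coefficient bounds
  have hK3 : (1:ℝ) ≤ K ^ 3 := by nlinarith
  have d1 : δ * K ≤ 1 / 100000 := by
    have hWK : (1:ℝ) ≤ Wr * K ^ 2 := by nlinarith
    have h := mul_le_mul_of_nonneg_left hWK (by positivity : (0:ℝ) ≤ δ * K)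
    nlinarith [h]
  have d2 : δ * K ^ 2 * Wr ≤ 1 / 100000 := by
    have h := mul_le_mul_of_nonneg_left hK.le (by positivity : (0:ℝ) ≤ δ * K ^ 2 * Wr)
    nlinarith [h]
  have d3 : δ * Wr ≤ 1 / 100000 := by
    have h := mul_le_mul_of_nonneg_left hK3 (by positivity : (0:ℝ) ≤ δ * Wr)
    nlinarith [h]
  have e1 : δ * (8 * K * |s|) ≤ 8 / 100000 * |s| := by
    have h := mul_le_mul_of_nonneg_right d1 hs0
    nlinarith [h]
  have e2 : δ * (32 * K ^ 2 * |s| * Wr) ≤ 32 / 100000 * |s| := by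
    have h := mul_le_mul_of_nonneg_right d2 hs0
    nlinarith [h]
  have e3 : δ * (128 * K ^ 3 * s ^ 2 * Wr ^ 2) ≤ 1024 / 10000000000 * |s| := by
    have hW8 : Wr * |s| ≤ 8 / 100000 := by
      have h := mul_le_mul_of_nonneg_left h8d hW0.le
      nlinarith [h]
    have hfac : δ * K ^ 3 * Wr ^ 2 * |s| ≤ 8 / 10000000000 := by
      have : δ * K ^ 3 * Wr ^ 2 * |s| = (δ * Wr * K ^ 3) * (Wr * |s|) := by ring
      rw [this]
      have h1 : (0:ℝ) ≤ δ * Wr * K ^ 3 := by positivity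
      have h2 : (0:ℝ) ≤ Wr * |s| := by positivity
      calc (δ * Wr * K ^ 3) * (Wr * |s|) ≤ (1/100000) * (8/100000) := by
            exact mul_le_mul hδW hW8 h2 (by norm_num)
        _ = 8 / 10000000000 := by norm_num
    have hsq : s ^ 2 = |s| * |s| := by rw [← sq_abs s, sq]
    calc δ * (128 * K ^ 3 * s ^ 2 * Wr ^ 2) = 128 * (δ * K ^ 3 * Wr ^ 2 * |s|) * |s| := by
          rw [hsq]; ring
      _ ≤ 128 * (8 / 10000000000) * |s| := by
          have h := mul_le_mul_of_nonneg_right hfac hs0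
          nlinarith [h]
      _ = 1024 / 10000000000 * |s| := by ring
  have hsum : |t| ≤ 41 / 100000 * |s| := by linarith
  have : |t| ≤ 164 / 100000 * |t| := by
    have h := mul_le_mul_of_nonneg_left h4t (by norm_num : (0:ℝ) ≤ 41 / 100000)
    linarith [h]
  have ht00 : |t| ≤ 0 := by linarith
  exact abs_eq_zero.mp (le_antisymm ht00 ht0)


set_option maxHeartbeats 2000000 in
theorem eta_injective (K : ℝ) (hK : 1 < K) (φ : ℝ → ℝ)
    (hφ : ContDiff ℝ (⊤ : ℕ∞) φ)
    (hφ01 : ∀ x, 0 ≤ x → 0 ≤ φ x ∧ φ x ≤ 1)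
    (hlow : ∀ x, 0 ≤ x → Set.indicator (Set.Icc (0:ℝ) K) (fun _ => 1) x ≤ φ x)
    (hupp : ∀ x, 0 ≤ x → φ x ≤ Set.indicator (Set.Icc (0:ℝ) (2 * K)) (fun _ => 1) x)
    (hderiv : ∀ x, 0 ≤ x →
      |deriv φ x| ≤ Set.indicator (Set.Icc (0:ℝ) (2 * K)) (fun _ => 1) x) :
    ∃ c > (0:ℝ), ∀ W : ℕ, 1 ≤ W → ∀ δ : ℝ, 0 < δ → δ * W ≤ c →
    ∀ G Gt : Mat W, G.IsHermitian → Gt.IsHermitian →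
    ∀ z : ℝ, |z| ≤ Real.sqrt W → ∀ σ : ℝ, σ = 1 ∨ σ = -1 →
    Function.Injective (fun A : Mat W =>
      Real.exp (σ * δ * (φ (hsSq G / (W : ℝ) ^ 2) * φ (hsSq Gt / (W : ℝ) ^ 2)) *
          φ (hsSq A / (W : ℝ)) *
          φ (hsSq (G + (z : ℂ) • 1 + A * Gt * Aᴴ) / (W : ℝ) ^ 2)) • A) := by
  have hK0 : (0:ℝ) < K := by linarith
  have hφ0 : ∀ x, 0 ≤ x → 0 ≤ φ x := fun x hx => (hφ01 x hx).1
  have hφ1 : ∀ x, 0 ≤ x → φ x ≤ 1 := fun x hx => (hφ01 x hx).2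
  -- φ vanishes beyond 2K
  have hvan : ∀ x, 2 * K < x → φ x = 0 := by
    intro x hx
    have hx0 : 0 ≤ x := by linarith
    have h1 := hupp x hx0
    rw [Set.indicator_of_notMem (by simp [Set.mem_Icc]; intro; linarith)] at h1
    exact le_antisymm h1 (hφ0 x hx0)
  -- φ is 1-Lipschitz on [0, ∞)
  have hlip : ∀ x y : ℝ, 0 ≤ x → 0 ≤ y → |φ x - φ y| ≤ |x - y| := by
    intro x y hx hy
    have hdiff : ∀ u : ℝ, u ∈ Set.Ici (0:ℝ) → DifferentiableAt ℝ φ u := fun u _ =>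
      (hφ.differentiable (by simp)).differentiableAt
    have hbnd : ∀ u : ℝ, u ∈ Set.Ici (0:ℝ) → ‖deriv φ u‖ ≤ 1 := by
      intro u hu
      refine (hderiv u hu).trans ?_
      by_cases h : u ∈ Set.Icc (0:ℝ) (2*K)
      · rw [Set.indicator_of_mem h]
      · rw [Set.indicator_of_notMem h]; norm_num
    have := (convex_Ici (0:ℝ)).norm_image_sub_le_of_norm_deriv_le hdiff hbnd hy hx
    simpa using this
  -- scaling estimate
  have hscale : ∀ x u : ℝ, 0 ≤ x → 1 ≤ u → |φ x - φ (u * x)| ≤ 2 * K * (u - 1) := by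
    intro x u hx hu
    by_cases hx2 : 2 * K < x
    · rw [hvan x hx2, hvan (u * x) (by nlinarith)]
      simp
      nlinarith
    · push_neg at hx2
      have h1 := hlip x (u * x) hx (by positivity)
      have h2 : |x - u * x| = x * (u - 1) := by
        rw [abs_of_nonpos (by nlinarith)]; ring
      rw [h2] at h1
      nlinarith
  refine ⟨1 / (100000 * K ^ 3), by positivity, ?_⟩
  intro W hW δ hδ hδW G Gt hG hGt z hz σ hσ
  have hW1 : (1:ℝ) ≤ (W:ℝ) := by exact_mod_cast hW
  have hW0 : (0:ℝ) < (W:ℝ) := by linarith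
  have hσ1 : |σ| = 1 := by rcases hσ with rfl | rfl <;> simp
  have hδW' : δ * (W:ℝ) * K ^ 3 ≤ 1 / 100000 := by
    have h0 : (0:ℝ) < 100000 * K ^ 3 := by positivity
    rw [le_div_iff₀ h0] at hδW
    nlinarith [hδW]
  have hK3 : (1:ℝ) ≤ K ^ 3 := by
    calc (1:ℝ) = 1 ^ 3 := by norm_num
      _ ≤ K ^ 3 := pow_le_pow_left₀ zero_le_one hK.le 3
  have hδ' : δ * K ^ 3 ≤ 1 / 100000 := by
    have h := mul_le_mul_of_nonneg_left hW1 (by positivity : (0:ℝ) ≤ δ * K ^ 3)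
    nlinarith [h]
  have hδsmall : δ ≤ 1 / 100000 := by
    have h := mul_le_mul_of_nonneg_left hK3 hδ.le
    nlinarith [h]
  intro A B hAB
  set F : Mat W → ℝ := fun C => σ * δ *
      (φ (hsSq G / (W : ℝ) ^ 2) * φ (hsSq Gt / (W : ℝ) ^ 2)) * φ (hsSq C / (W : ℝ)) *
      φ (hsSq (G + (z : ℂ) • 1 + C * Gt * Cᴴ) / (W : ℝ) ^ 2) with hF
  have hAB' : Real.exp (F A) • A = Real.exp (F B) • B := hAB
  -- the collision scalar
  set t : ℝ := F A - F B with htdef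
  have hBA : B = Real.exp t • A := by
    have h1 := congrArg (fun M : Mat W => Real.exp (-(F B)) • M) hAB'.symm
    rw [smul_smul, smul_smul, ← Real.exp_add, ← Real.exp_add, neg_add_cancel, Real.exp_zero,
      one_smul] at h1
    rw [show t = -(F B) + F A by rw [htdef]; ring]
    exact h1
  -- it suffices to show t = 0
  suffices ht0 : t = 0 by
    rw [hBA, ht0, Real.exp_zero, one_smul]
  -- basic bounds on F
  have hdivnn : ∀ C : Mat W, (0:ℝ) ≤ hsSq C / (W:ℝ) := fun C =>
    div_nonneg (hsSq_nonneg C) hW0.le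
  have hdivnn2 : ∀ C : Mat W, (0:ℝ) ≤ hsSq C / (W:ℝ) ^ 2 := fun C =>
    div_nonneg (hsSq_nonneg C) (by positivity)
  have hFb : ∀ C : Mat W, |F C| ≤ δ := by
    intro C
    simp only [hF]
    rw [abs_mul, abs_mul, abs_mul, abs_mul, hσ1, abs_of_nonneg hδ.le]
    have b1 : |φ (hsSq G / (W:ℝ)^2) * φ (hsSq Gt / (W:ℝ)^2)| ≤ 1 := by
      rw [abs_of_nonneg (mul_nonneg (hφ0 _ (hdivnn2 G)) (hφ0 _ (hdivnn2 Gt)))]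
      exact mul_le_one₀ (hφ1 _ (hdivnn2 G)) (hφ0 _ (hdivnn2 Gt)) (hφ1 _ (hdivnn2 Gt))
    have b2 : |φ (hsSq C / (W:ℝ))| ≤ 1 := by
      rw [abs_of_nonneg (hφ0 _ (hdivnn C))]; exact hφ1 _ (hdivnn C)
    have b3 : |φ (hsSq (G + (z:ℂ) • 1 + C * Gt * Cᴴ) / (W:ℝ)^2)| ≤ 1 := by
      rw [abs_of_nonneg (hφ0 _ (hdivnn2 _))]; exact hφ1 _ (hdivnn2 _)
    have n1 := abs_nonneg (φ (hsSq G / (W:ℝ)^2) * φ (hsSq Gt / (W:ℝ)^2))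
    have n2 := abs_nonneg (φ (hsSq C / (W:ℝ)))
    have n3 := abs_nonneg (φ (hsSq (G + (z:ℂ) • 1 + C * Gt * Cᴴ) / (W:ℝ)^2))
    calc 1 * δ * |φ (hsSq G / (W:ℝ)^2) * φ (hsSq Gt / (W:ℝ)^2)| * |φ (hsSq C / (W:ℝ))| *
          |φ (hsSq (G + (z:ℂ) • 1 + C * Gt * Cᴴ) / (W:ℝ)^2)| ≤ 1 * δ * 1 * 1 * 1 := by
          have s1 : 1 * δ * |φ (hsSq G / (W:ℝ)^2) * φ (hsSq Gt / (W:ℝ)^2)| ≤ 1 * δ * 1 :=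
            mul_le_mul_of_nonneg_left b1 (by positivity)
          have s2 : 1 * δ * |φ (hsSq G / (W:ℝ)^2) * φ (hsSq Gt / (W:ℝ)^2)| *
              |φ (hsSq C / (W:ℝ))| ≤ (1 * δ * 1) * 1 :=
            mul_le_mul s1 b2 n2 (by positivity)
          calc 1 * δ * |φ (hsSq G / (W:ℝ)^2) * φ (hsSq Gt / (W:ℝ)^2)| * |φ (hsSq C / (W:ℝ))| *
                |φ (hsSq (G + (z:ℂ) • 1 + C * Gt * Cᴴ) / (W:ℝ)^2)| ≤ ((1 * δ * 1) * 1) * 1 :=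
                mul_le_mul s2 b3 n3 (by positivity)
            _ = 1 * δ * 1 * 1 * 1 := by ring
      _ = δ := by ring
  have ht2 : |t| ≤ 2 * δ := by
    have h1 := abs_le.mp (hFb A)
    have h2 := abs_le.mp (hFb B)
    rw [htdef, abs_le]
    constructor
    · linarith [h1.1, h2.2]
    · linarith [h1.2, h2.1]
  -- the multiplicative factor u = exp(2t) and s = u - 1
  set u : ℝ := Real.exp (2 * t) with hu
  have hu0 : 0 < u := Real.exp_pos _
  set s : ℝ := u - 1 with hs
  have hs4t : |s| ≤ 4 * |t| := by
    have h1 : |2 * t| ≤ 1 := by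
      rw [abs_mul, abs_two]
      linarith [ht2, hδsmall]
    have := Real.abs_exp_sub_one_le h1
    rw [abs_mul, abs_two] at this
    rw [hs, hu]
    linarith
  have hs8d : |s| ≤ 8 * δ := by linarith [hs4t, ht2, abs_nonneg t]
  have hu14 : (1:ℝ)/4 ≤ u := by
    have h1 : (-1:ℝ) ≤ 2 * t := by
      have := abs_le.mp ht2
      linarith [hδsmall]
    have h2 : Real.exp (-1) ≤ u := by rw [hu]; exact Real.exp_le_exp.mpr h1
    have h3 : Real.exp 1 ≤ 4 := by linarith [Real.exp_one_lt_d9]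
    have h4 : (1:ℝ)/4 ≤ Real.exp (-1) := by
      rw [Real.exp_neg, inv_eq_one_div]
      rw [div_le_div_iff₀ (by norm_num : (0:ℝ) < 4) (Real.exp_pos 1)]
      linarith [h3]
    linarith
  -- notation for the six φ-values
  set g1 : ℝ := φ (hsSq G / (W:ℝ)^2) with hg1def
  set g2 : ℝ := φ (hsSq Gt / (W:ℝ)^2) with hg2def
  set M : Mat W := A * Gt * Aᴴ with hMdef
  set X : Mat W := G + (z:ℂ) • 1 + M with hXdef
  set p : ℝ := φ (hsSq A / (W:ℝ)) with hpdef
  set q : ℝ := φ (hsSq X / (W:ℝ)^2) with hqdef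
  have hexp2 : Real.exp t * Real.exp t = u := by
    rw [hu, ← Real.exp_add]; congr 1; ring
  have hsB : hsSq B = u * hsSq A := by
    rw [hBA, hsSq_smul, sq, hexp2]
  have hctA : (Real.exp t • A)ᴴ = Real.exp t • Aᴴ := conjTranspose_real_smul _ _
  have hBM : B * Gt * Bᴴ = u • M := by
    rw [hBA, hctA, Matrix.smul_mul, Matrix.smul_mul, Matrix.mul_smul, smul_smul, hexp2, hMdef]
  have hXB : G + (z:ℂ) • 1 + B * Gt * Bᴴ = X + s • M := by
    rw [hBM, hXdef, hs, sub_smul, one_smul]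
    abel
  set p' : ℝ := φ (hsSq B / (W:ℝ)) with hp'def
  set q' : ℝ := φ (hsSq (X + s • M) / (W:ℝ)^2) with hq'def
  -- the key identity for t
  have ht_eq : t = σ * δ * (g1 * g2) * (p * q - p' * q') := by
    rw [htdef]
    simp only [hF]
    rw [hXB, ← hMdef, ← hXdef, hpdef, hqdef, hp'def, hq'def]
    ring
  -- basic interval bounds
  have hg1b : 0 ≤ g1 ∧ g1 ≤ 1 := ⟨hφ0 _ (hdivnn2 G), hφ1 _ (hdivnn2 G)⟩
  have hg2b : 0 ≤ g2 ∧ g2 ≤ 1 := ⟨hφ0 _ (hdivnn2 Gt), hφ1 _ (hdivnn2 Gt)⟩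
  have hpb : 0 ≤ p ∧ p ≤ 1 := ⟨hφ0 _ (hdivnn A), hφ1 _ (hdivnn A)⟩
  have hqb : 0 ≤ q ∧ q ≤ 1 := ⟨hφ0 _ (hdivnn2 X), hφ1 _ (hdivnn2 X)⟩
  have hp'b : 0 ≤ p' ∧ p' ≤ 1 := ⟨hφ0 _ (hdivnn B), hφ1 _ (hdivnn B)⟩
  have hq'b : 0 ≤ q' ∧ q' ≤ 1 := ⟨hφ0 _ (hdivnn2 _), hφ1 _ (hdivnn2 _)⟩
  -- the case where g2 = 0 is immediate
  by_cases hg20 : g2 = 0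
  · rw [ht_eq, hg20]; ring
  -- otherwise hsSq Gt is controlled
  have hGt2K : hsSq Gt ≤ 2 * K * (W:ℝ)^2 := by
    by_contra hcon
    push_neg at hcon
    refine hg20 ?_
    rw [hg2def]
    refine hvan _ ?_
    rw [lt_div_iff₀ (by positivity)]
    linarith [hcon]
  -- estimate |p - p'|
  have est1 : |p - p'| ≤ 8 * K * |s| := by
    have harg : hsSq B / (W:ℝ) = u * (hsSq A / (W:ℝ)) := by
      rw [hsB]; ring
    rcases le_or_gt 1 u with hu1 | hu1
    · have h1 := hscale (hsSq A / (W:ℝ)) u (hdivnn A) hu1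
      rw [hpdef, hp'def, harg]
      have habs : |s| = u - 1 := by rw [hs, abs_of_nonneg (by linarith)]
      rw [habs]
      exact lem_a hK0 (by linarith) h1
    · have hinv : 1 ≤ 1 / u := by
        rw [le_div_iff₀ hu0]; linarith
      have h1 := hscale (u * (hsSq A / (W:ℝ))) (1/u) (mul_nonneg hu0.le (hdivnn A)) hinv
      rw [show (1/u) * (u * (hsSq A / (W:ℝ))) = hsSq A / (W:ℝ) by
        rw [← mul_assoc, one_div, inv_mul_cancel₀ (ne_of_gt hu0), one_mul]] at h1
      rw [hpdef, hp'def, harg, abs_sub_comm]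
      have habs : |s| = 1 - u := by rw [hs, abs_of_nonpos (by linarith)]; ring
      rw [habs]
      exact lem_b hK0 hu14 hu1 h1
  -- estimate p' * |q - q'|
  have est3 : p' * |q - q'| ≤ 32 * K^2 * |s| * (W:ℝ) + 128 * K^3 * s^2 * (W:ℝ)^2 := by
    have hrhs : (0:ℝ) ≤ 32 * K^2 * |s| * (W:ℝ) + 128 * K^3 * s^2 * (W:ℝ)^2 := by positivity
    by_cases hp'0 : p' = 0
    · rw [hp'0, zero_mul]; exact hrhs
    -- support: hsSq B ≤ 2K W, hence hsSq A ≤ 8K W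
    have hB2K : hsSq B ≤ 2 * K * (W:ℝ) := by
      by_contra hcon
      push_neg at hcon
      refine hp'0 ?_
      rw [hp'def]
      refine hvan _ ?_
      rw [lt_div_iff₀ hW0]
      linarith [hcon]
    have hA8K : hsSq A ≤ 8 * K * (W:ℝ) := by
      rw [hsB] at hB2K
      exact lem_c hK0 hW0 hu14 (hsSq_nonneg A) hB2K
    -- bound on hsSq M
    have hMb : hsSq M ≤ 128 * K^3 * (W:ℝ)^4 := by
      rw [hMdef]
      exact mbound hK hW1 (hsSq_nonneg A) (hsSq_nonneg Gt) (hsSq_triple_le A Gt) hA8K hGt2K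
    have hsqrt : Real.sqrt ((2 * K * (W:ℝ)^2) * (128 * K^3 * (W:ℝ)^4)) = 16 * K^2 * (W:ℝ)^3 := by
      rw [show (2 * K * (W:ℝ)^2) * (128 * K^3 * (W:ℝ)^4) = (16 * K^2 * (W:ℝ)^3)^2 by ring]
      exact Real.sqrt_sq (by positivity)
    by_cases hqq : 2 * K < hsSq X / (W:ℝ)^2 ∧ 2 * K < hsSq (X + s • M) / (W:ℝ)^2
    · have hq0 : q = 0 := by rw [hqdef]; exact hvan _ hqq.1
      have hq'0 : q' = 0 := by rw [hq'def]; exact hvan _ hqq.2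
      rw [hq0, hq'0]
      simpa using hrhs
    · have hdiffb : |hsSq (X + s • M) - hsSq X| ≤
          2 * |s| * (16 * K^2 * (W:ℝ)^3) + s^2 * (128 * K^3 * (W:ℝ)^4) := by
        rcases le_or_gt (hsSq X / (W:ℝ)^2) (2*K) with hcase | hcase
        · have hXb : hsSq X ≤ 2 * K * (W:ℝ)^2 := by
            rw [div_le_iff₀ (by positivity)] at hcase
            linarith
          have h := hsSq_perturb X M s hXb hMb
          rw [hsqrt] at h
          exact h
        · have hcase2 : hsSq (X + s • M) / (W:ℝ)^2 ≤ 2 * K := by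
            by_contra hcon2
            push_neg at hcon2
            exact hqq ⟨hcase, hcon2⟩
          have hXBb : hsSq (X + s • M) ≤ 2 * K * (W:ℝ)^2 := by
            rw [div_le_iff₀ (by positivity)] at hcase2
            linarith
          have heq : (X + s • M) + (-s) • M = X := by
            rw [neg_smul]
            abel
          have h := hsSq_perturb (X + s • M) M (-s) hXBb hMb
          rw [hsqrt, heq, abs_sub_comm] at h
          simpa using h
      have hlq : |q - q'| ≤ 32 * K^2 * |s| * (W:ℝ) + 128 * K^3 * s^2 * (W:ℝ)^2 := by
        have h1 := hlip (hsSq X / (W:ℝ)^2) (hsSq (X + s • M) / (W:ℝ)^2) (hdivnn2 X) (hdivnn2 _)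
        have h2 : |hsSq X / (W:ℝ)^2 - hsSq (X + s • M) / (W:ℝ)^2|
            = |hsSq (X + s • M) - hsSq X| / (W:ℝ)^2 := by
          rw [div_sub_div_same, abs_div, abs_of_pos (by positivity : (0:ℝ) < (W:ℝ)^2),
            abs_sub_comm]
        rw [hqdef, hq'def]
        rw [h2] at h1
        refine h1.trans ?_
        rw [div_le_iff₀ (by positivity : (0:ℝ) < (W:ℝ)^2)]
        refine hdiffb.trans (le_of_eq ?_)
        ring
      calc p' * |q - q'| ≤ 1 * |q - q'| :=
            mul_le_mul_of_nonneg_right hp'b.2 (abs_nonneg _)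
        _ = |q - q'| := one_mul _
        _ ≤ _ := hlq
  -- combine
  have hcomb : |t| ≤ δ * (|p - p'| + p' * |q - q'|) := by
    have hgg : |g1 * g2| ≤ 1 := by
      rw [abs_of_nonneg (mul_nonneg hg1b.1 hg2b.1)]
      exact mul_le_one₀ hg1b.2 hg2b.1 hg2b.2
    have hsplit : |p * q - p' * q'| ≤ |p - p'| + p' * |q - q'| := by
      have e : p * q - p' * q' = (p - p') * q + p' * (q - q') := by ring
      rw [e]
      refine (abs_add_le _ _).trans ?_
      have e1 : |(p - p') * q| ≤ |p - p'| := by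
        rw [abs_mul, abs_of_nonneg hqb.1]
        exact mul_le_of_le_one_right (abs_nonneg _) hqb.2
      have e2 : |p' * (q - q')| = p' * |q - q'| := by
        rw [abs_mul, abs_of_nonneg hp'b.1]
      linarith
    calc |t| = |σ| * |δ| * |g1 * g2| * |p * q - p' * q'| := by
          rw [ht_eq, abs_mul, abs_mul, abs_mul]
      _ = δ * (|g1 * g2| * |p * q - p' * q'|) := by
          rw [hσ1, abs_of_nonneg hδ.le]; ring
      _ ≤ δ * (1 * |p * q - p' * q'|) := by
          refine mul_le_mul_of_nonneg_left ?_ hδ.le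
          exact mul_le_mul_of_nonneg_right hgg (abs_nonneg _)
      _ = δ * |p * q - p' * q'| := by ring
      _ ≤ δ * (|p - p'| + p' * |q - q'|) := mul_le_mul_of_nonneg_left hsplit hδ.le
  have hfin : |t| ≤ δ * (8 * K * |s|) + δ * (32 * K^2 * |s| * (W:ℝ))
      + δ * (128 * K^3 * s^2 * (W:ℝ)^2) := by
    have m1 := mul_le_mul_of_nonneg_left est1 hδ.le
    have m2 := mul_le_mul_of_nonneg_left est3 hδ.le
    calc |t| ≤ δ * (|p - p'| + p' * |q - q'|) := hcomb
      _ = δ * |p - p'| + δ * (p' * |q - q'|) := by ring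
      _ ≤ δ * (8 * K * |s|) + δ * (32 * K^2 * |s| * (W:ℝ) + 128 * K^3 * s^2 * (W:ℝ)^2) := by
          exact add_le_add m1 m2
      _ = δ * (8 * K * |s|) + δ * (32 * K^2 * |s| * (W:ℝ))
          + δ * (128 * K^3 * s^2 * (W:ℝ)^2) := by ring
  exact final_arith hK hδ hW1 hδW' hs4t hs8d hfin

end RBM
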